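/- (Theorem 2, ball carving partitions.) There is a universal constant C > 0 such that the following holds. Let (𝒟,h) be a separable binary classification task on ℝ^d (d ≥ 1) with supp(𝒟) bounded, let f be a measurable classifier, let ε > 0 and β > 1, and let g_Π be the smoothed classifier obtained from the ball carving partition Π of supp(𝒟) with parameter εβ. Then 𝔼_{R,σ}[AR(g_Π, ε)] ≤ 2·S(εβ) + 2·R(f) + C·d/β; moreover, if AR(ε) > 0 then 𝔼_{R,σ}[AR(g_Π, ε)] ≤ (2·S(εβ)/S(2ε))·AR(ε) + 2·R(f) + C·d/β. -/

import Mathlib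

open MeasureTheory Metric Set
open scoped ENNReal NNReal

noncomputable section

/-- The Euclidean space `ℝ^d` with the `ℓ₂` metric. -/
abbrev Euc (d : ℕ) := EuclideanSpace ℝ (Fin d)

/-- A (binary) classifier: a measurable function with values in `{-1, 1}`. -/
def IsClassifier {d : ℕ} (f : Euc d → ℝ) : Prop :=
  Measurable f ∧ ∀ x, f x = 1 ∨ f x = -1

/-- The (standard) risk `R(f) = ℙ_{X ∼ 𝒟}(f(X) ≠ h(X))` of a classifier `f`
with respect to the data distribution `𝒟` and the ground truth `h`. -/
def risk {d : ℕ} (𝒟 : Measure (Euc d)) (h f : Euc d → ℝ) : ℝ≥0∞ :=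
  𝒟 {x | f x ≠ h x}

/-- The adversarial risk
`AR(f,ε) = ℙ_{X ∼ 𝒟}(∃ η, ‖η‖₂ < ε ∧ f(X+η) ≠ h(X))`. -/
def advRisk {d : ℕ} (𝒟 : Measure (Euc d)) (h f : Euc d → ℝ) (ε : ℝ) : ℝ≥0∞ :=
  𝒟 {x | ∃ η : Euc d, ‖η‖ < ε ∧ f (x + η) ≠ h x}

/-- `AR(ε)`: the infimum of the adversarial risk over all measurable classifiers. -/
def optAdvRisk {d : ℕ} (𝒟 : Measure (Euc d)) (h : Euc d → ℝ) (ε : ℝ) : ℝ≥0∞ :=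
  ⨅ (f : Euc d → ℝ) (_ : IsClassifier f), advRisk 𝒟 h f ε

/-- The `ℓ₂` distance between two sets, as an extended nonnegative real
(`∞` if one of the sets is empty). -/
def setEDist {d : ℕ} (A B : Set (Euc d)) : ℝ≥0∞ :=
  ⨅ a ∈ A, ⨅ b ∈ B, edist a b

/-- The separation function `S(ε)`: the infimum, over measurable sets `E` whose
removal separates the two classes `M₋ = h⁻¹({-1})` and `M₊ = h⁻¹({1})` by
distance at least `ε`, of the probability mass of `E`. -/
def sep {d : ℕ} (𝒟 : Measure (Euc d)) (h : Euc d → ℝ) (ε : ℝ) : ℝ≥0∞ :=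
  ⨅ (E : Set (Euc d)) (_ : MeasurableSet E)
    (_ : ENNReal.ofReal ε ≤ setEDist (h ⁻¹' {-1} \ E) (h ⁻¹' {1} \ E)), 𝒟 E

/-- The support of a Borel measure on `ℝ^d`: the set of points all of whose
neighborhoods have positive mass. -/
def msupport {d : ℕ} (𝒟 : Measure (Euc d)) : Set (Euc d) :=
  {x | ∀ r : ℝ, 0 < r → 0 < 𝒟 (ball x r)}

/-- `sgn t = 1` if `t ≥ 0` and `sgn t = -1` otherwise. -/
def sgn (t : ℝ) : ℝ := if 0 ≤ t then 1 else -1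

/-- `sgn (𝔼_{Z ∼ 𝒟}[f(Z) ∣ Z ∈ A])`: the sign of the conditional expectation of
`f` under `𝒟` given the block `A`. -/
def smoothVal {d : ℕ} (𝒟 : Measure (Euc d)) (f : Euc d → ℝ) (A : Set (Euc d)) : ℝ :=
  sgn ((∫ z in A, f z ∂𝒟) / (𝒟 A).toReal)

/-- The block `Π̂(uᵢ) = B_R(uᵢ) \\ ⋃_{j : σ(j) < σ(i)} B_R(uⱼ)` of the ball
carving partition built from the net `u`, radius `R` and order `σ`. -/
def carvBlock {d n : ℕ} (u : Fin n → Euc d) (R : ℝ) (σ : Equiv.Perm (Fin n))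
    (i : Fin n) : Set (Euc d) :=
  ball (u i) R \ ⋃ j ∈ {j | σ j < σ i}, ball (u j) R

/-- The uniform probability measure on the interval `Ioc a b`. -/
def unifIoc (a b : ℝ) : Measure ℝ :=
  (volume (Set.Ioc a b))⁻¹ • volume.restrict (Set.Ioc a b)

instance (n : ℕ) : MeasurableSpace (Equiv.Perm (Fin n)) := ⊤

/-- The uniform probability measure on permutations of `Fin n` (a uniformly
random linear order of the net). -/
def unifPerm (n : ℕ) : Measure (Equiv.Perm (Fin n)) :=
  (Measure.count (Set.univ : Set (Equiv.Perm (Fin n))))⁻¹ • Measure.count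

/-- The joint distribution of the randomness `(R, σ)` of the ball carving
partition with parameter `ε`: `R` uniform on `(ε/4, ε/2]` and `σ` a uniformly
random order, independent. -/
def carvMeasure (ε : ℝ) (n : ℕ) : Measure (ℝ × Equiv.Perm (Fin n)) :=
  (unifIoc (ε / 4) (ε / 2)).prod (unifPerm n)

section AuxLemmas

variable {d n : ℕ}

instance (n : ℕ) : MeasurableSingletonClass (Equiv.Perm (Fin n)) :=
  ⟨fun _ => MeasurableSpace.measurableSet_top⟩

lemma measurableSet_perm (s : Set (Equiv.Perm (Fin n))) : MeasurableSet s :=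
  MeasurableSpace.measurableSet_top

/-- the complement of the support is null -/
lemma aux_msupport_compl (𝒟 : Measure (Euc d)) : 𝒟 (msupport 𝒟)ᶜ = 0 := by
  have hmem : ∀ y : ↥(msupport 𝒟)ᶜ, ∃ r : ℝ, 0 < r ∧ 𝒟 (ball (y : Euc d) r) = 0 := by
    rintro ⟨y, hy⟩
    simp only [msupport, mem_compl_iff, mem_setOf_eq, not_forall] at hy
    obtain ⟨r, hr, h0⟩ := hy
    exact ⟨r, hr, by simpa using h0⟩
  choose r hr h0 using hmem
  obtain ⟨T, hTc, hT⟩ := TopologicalSpace.isOpen_iUnion_countable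
    (fun y : ↥(msupport 𝒟)ᶜ => ball (y : Euc d) (r y)) (fun y => isOpen_ball)
  have hsub : (msupport 𝒟)ᶜ ⊆ ⋃ y ∈ T, ball (y : Euc d) (r y) := by
    rw [hT]
    intro x hx
    exact mem_iUnion.2 ⟨⟨x, hx⟩, mem_ball_self (hr ⟨x, hx⟩)⟩
  refine le_antisymm ?_ (zero_le)
  calc 𝒟 (msupport 𝒟)ᶜ ≤ 𝒟 (⋃ y ∈ T, ball (y : Euc d) (r y)) := measure_mono hsub
  _ = 0 := (measure_biUnion_null_iff hTc).2 fun y _ => h0 y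

lemma aux_sep_le_one (𝒟 : Measure (Euc d)) [IsProbabilityMeasure 𝒟] (h : Euc d → ℝ) (ε : ℝ) :
    sep 𝒟 h ε ≤ 1 := by
  have : sep 𝒟 h ε ≤ 𝒟 Set.univ := by
    refine iInf_le_of_le Set.univ (iInf_le_of_le MeasurableSet.univ (iInf_le_of_le ?_ le_rfl))
    simp [setEDist]
  simpa using this

lemma aux_sep_ne_top (𝒟 : Measure (Euc d)) [IsProbabilityMeasure 𝒟] (h : Euc d → ℝ) (ε : ℝ) :
    sep 𝒟 h ε ≠ ⊤ :=
  fun ht => by simpa [ht] using aux_sep_le_one 𝒟 h ε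

/-- `S(2ε) ≤ AR(f', ε)` for any classifier `f'`. -/
lemma aux_sep_le_advRisk (𝒟 : Measure (Euc d)) (h : Euc d → ℝ) (f' : Euc d → ℝ)
    (ε : ℝ) : sep 𝒟 h (2 * ε) ≤ advRisk 𝒟 h f' ε := by
  set s : Set (Euc d) := {x | ∃ η : Euc d, ‖η‖ < ε ∧ f' (x + η) ≠ h x} with hs
  set E := toMeasurable 𝒟 s with hE
  have hsub : s ⊆ E := subset_toMeasurable 𝒟 s
  have hdist : ENNReal.ofReal (2 * ε) ≤ setEDist (h ⁻¹' {-1} \ E) (h ⁻¹' {1} \ E) := by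
    refine le_iInf₂ fun a ha => le_iInf₂ fun b hb => ?_
    by_contra hlt
    push_neg at hlt
    rw [edist_dist] at hlt
    have hdab : dist a b < 2 * ε := by
      rcases le_or_gt (2*ε) (dist a b) with hge | hok
      · exact absurd hlt (not_lt.2 (ENNReal.ofReal_le_ofReal hge))
      · exact hok
    have hηa : ‖(2:ℝ)⁻¹ • (b - a)‖ < ε := by
      rw [norm_smul, Real.norm_eq_abs]
      rw [dist_eq_norm, norm_sub_rev] at hdab
      rw [abs_of_pos (by norm_num : (0:ℝ) < (2:ℝ)⁻¹)]
      linarith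
    have hηb : ‖(2:ℝ)⁻¹ • (a - b)‖ < ε := by
      rw [norm_smul, Real.norm_eq_abs]
      rw [dist_eq_norm] at hdab
      rw [abs_of_pos (by norm_num : (0:ℝ) < (2:ℝ)⁻¹)]
      linarith
    have hkey : a + (2:ℝ)⁻¹ • (b - a) = b + (2:ℝ)⁻¹ • (a - b) := by
      module
    have hna : a ∉ s := fun hmem => ha.2 (hsub hmem)
    have hnb : b ∉ s := fun hmem => hb.2 (hsub hmem)
    simp only [hs, mem_setOf_eq, not_exists, not_and, not_not] at hna hnb
    have h1 : f' (a + (2:ℝ)⁻¹ • (b - a)) = h a := hna _ hηa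
    have h2 : f' (b + (2:ℝ)⁻¹ • (a - b)) = h b := hnb _ hηb
    rw [hkey, h2] at h1
    have hb1 : h b = 1 := hb.1
    have ha1 : h a = -1 := ha.1
    rw [hb1, ha1] at h1
    norm_num at h1
  have : sep 𝒟 h (2 * ε) ≤ 𝒟 E :=
    iInf_le_of_le E (iInf_le_of_le (measurableSet_toMeasurable 𝒟 s)
      (iInf_le_of_le hdist le_rfl))
  rw [hE, measure_toMeasurable] at this
  exact this

end AuxLemmas
section Aux2
variable {d n : ℕ}

lemma aux_unifIoc_apply (a b : ℝ) (s : Set ℝ) :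
    unifIoc a b s = (volume (Set.Ioc a b))⁻¹ * volume (s ∩ Set.Ioc a b) := by
  rw [unifIoc, Measure.smul_apply, Measure.restrict_apply' measurableSet_Ioc, smul_eq_mul]

lemma aux_unifIoc_prob (a b : ℝ) (hab : a < b) : IsProbabilityMeasure (unifIoc a b) := by
  constructor
  rw [aux_unifIoc_apply, Set.univ_inter, Real.volume_Ioc,
    ENNReal.inv_mul_cancel (by simp [hab]) (by simp)]

lemma aux_unifIoc_le (a b : ℝ) (hab : a < b) (s : Set ℝ) (c e : ℝ)
    (hs : s ∩ Set.Ioc a b ⊆ Set.Ioc c e) :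
    unifIoc a b s ≤ ENNReal.ofReal ((e - c) / (b - a)) := by
  rw [aux_unifIoc_apply]
  calc (volume (Set.Ioc a b))⁻¹ * volume (s ∩ Set.Ioc a b)
      ≤ (volume (Set.Ioc a b))⁻¹ * volume (Set.Ioc c e) := by
        exact mul_le_mul_right (measure_mono hs) _
    _ = (ENNReal.ofReal (b - a))⁻¹ * ENNReal.ofReal (e - c) := by
        rw [Real.volume_Ioc, Real.volume_Ioc]
    _ ≤ ENNReal.ofReal ((e - c) / (b - a)) := by
        rcases le_or_gt (e - c) 0 with h0 | h0
        · simp [ENNReal.ofReal_eq_zero.2 h0]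
        · rw [ENNReal.ofReal_div_of_pos (by linarith), div_eq_mul_inv, mul_comm]

lemma aux_count_univ_perm :
    Measure.count (Set.univ : Set (Equiv.Perm (Fin n))) =
      (Fintype.card (Equiv.Perm (Fin n)) : ℝ≥0∞) := by rw [Measure.count_univ]; simp

lemma aux_unifPerm_prob : IsProbabilityMeasure (unifPerm n) := by
  constructor
  rw [unifPerm, Measure.smul_apply, smul_eq_mul, ENNReal.inv_mul_cancel]
  · rw [aux_count_univ_perm]
    simp [Fintype.card_ne_zero]
  · rw [aux_count_univ_perm]
    simp

instance (n : ℕ) : IsProbabilityMeasure (unifPerm n) := aux_unifPerm_prob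

lemma aux_unifPerm_apply (s : Set (Equiv.Perm (Fin n))) :
    unifPerm n s = (Fintype.card (Equiv.Perm (Fin n)) : ℝ≥0∞)⁻¹ * (s.toFinite.toFinset.card) := by
  rw [unifPerm, Measure.smul_apply, smul_eq_mul,
    Measure.count_apply_finite _ s.toFinite, aux_count_univ_perm]

/-- counting permutations for which `j` is `σ`-minimal in `S` -/
lemma aux_perm_card (S : Finset (Fin n)) (j : Fin n) (hj : j ∈ S) :
    ((Finset.univ.filter
        (fun σ : Equiv.Perm (Fin n) => ∀ k ∈ S, k ≠ j → σ j < σ k)).card) * S.card ≤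
      Fintype.card (Equiv.Perm (Fin n)) := by
  classical
  set F : Fin n → Finset (Equiv.Perm (Fin n)) :=
    fun j' => Finset.univ.filter (fun σ => ∀ k ∈ S, k ≠ j' → σ j' < σ k) with hF
  have hinj : ∀ k ∈ S, (F j).card ≤ (F k).card := by
    intro k hk
    rcases eq_or_ne k j with rfl | hkj
    · exact le_rfl
    refine Finset.card_le_card_of_injOn (fun σ => σ * Equiv.swap j k) ?_ ?_
    · intro σ hσ
      simp only [hF, Finset.mem_coe, Finset.mem_filter, Finset.mem_univ, true_and] at hσ ⊢
      intro m hm hmk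
      have hτk : (σ * Equiv.swap j k) k = σ j := by
        simp [Equiv.Perm.mul_apply, Equiv.swap_apply_right]
      rcases eq_or_ne m j with hmj | hmj
      · rw [hmj]
        have hτm : (σ * Equiv.swap j k) j = σ k := by
          simp [Equiv.Perm.mul_apply, Equiv.swap_apply_left]
        rw [hτk, hτm]
        exact hσ k hk hkj
      · have hτm : (σ * Equiv.swap j k) m = σ m := by
          simp [Equiv.Perm.mul_apply, Equiv.swap_apply_of_ne_of_ne hmj hmk]
        rw [hτk, hτm]
        exact hσ m hm hmj
    · intro σ₁ _ σ₂ _ hEq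
      simpa using mul_right_cancel hEq
  have hdisj : ∀ k₁ ∈ S, ∀ k₂ ∈ S, k₁ ≠ k₂ → Disjoint (F k₁) (F k₂) := by
    intro k₁ h₁ k₂ h₂ hne
    rw [Finset.disjoint_left]
    intro σ hσ1 hσ2
    simp only [hF, Finset.mem_filter, Finset.mem_univ, true_and] at hσ1 hσ2
    exact absurd (hσ2 k₁ h₁ hne) (not_lt.2 (hσ1 k₂ h₂ hne.symm).le)
  calc (F j).card * S.card = ∑ _k ∈ S, (F j).card := by
        rw [Finset.sum_const, smul_eq_mul, mul_comm]
    _ ≤ ∑ k ∈ S, (F k).card := Finset.sum_le_sum hinj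
    _ = (S.biUnion F).card := (Finset.card_biUnion hdisj).symm
    _ ≤ Fintype.card (Equiv.Perm (Fin n)) := by
        simpa using Finset.card_le_card (Finset.subset_univ (S.biUnion F))

lemma aux_unifPerm_le (S : Finset (Fin n)) (j : Fin n) (hj : j ∈ S) :
    unifPerm n {σ : Equiv.Perm (Fin n) | ∀ k ∈ S, k ≠ j → σ j < σ k} ≤ (S.card : ℝ≥0∞)⁻¹ := by
  classical
  rw [aux_unifPerm_apply]
  set s : Set (Equiv.Perm (Fin n)) := {σ | ∀ k ∈ S, k ≠ j → σ j < σ k} with hs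
  have hsf : s.toFinite.toFinset = Finset.univ.filter
      (fun σ : Equiv.Perm (Fin n) => ∀ k ∈ S, k ≠ j → σ j < σ k) := by
    ext σ; simp [hs]
  have hcard : (s.toFinite.toFinset.card) * S.card ≤ Fintype.card (Equiv.Perm (Fin n)) := by
    rw [hsf]; exact aux_perm_card S j hj
  rw [ENNReal.le_inv_iff_mul_le]
  calc (Fintype.card (Equiv.Perm (Fin n)) : ℝ≥0∞)⁻¹ * (s.toFinite.toFinset.card) * S.card
      = (Fintype.card (Equiv.Perm (Fin n)) : ℝ≥0∞)⁻¹ *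
        ((s.toFinite.toFinset.card : ℝ≥0∞) * S.card) := by rw [mul_assoc]
    _ ≤ (Fintype.card (Equiv.Perm (Fin n)) : ℝ≥0∞)⁻¹ *
        (Fintype.card (Equiv.Perm (Fin n)) : ℝ≥0∞) := by
        refine mul_le_mul_right ?_ _
        exact_mod_cast hcard
    _ = 1 := ENNReal.inv_mul_cancel (by simp [Fintype.card_ne_zero]) (by simp)

end Aux2
section Aux3
variable {d n : ℕ}

lemma aux_sum_inv_le {ι : Type*} [DecidableEq ι] (S : Finset ι) (v : ι → ℝ) :
    ∑ j ∈ S, ((S.filter (fun k => v k ≤ v j)).card : ℝ)⁻¹ ≤ (harmonic S.card : ℝ) := by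
  have key : ∀ (N : ℕ) (S : Finset ι), S.card = N →
      ∑ j ∈ S, ((S.filter (fun k => v k ≤ v j)).card : ℝ)⁻¹ ≤ (harmonic N : ℝ) := by
    intro N
    induction N with
    | zero =>
      intro S hN
      rw [Finset.card_eq_zero.1 hN]
      simp [harmonic]
    | succ N ih =>
      intro S hN
      have hne : S.Nonempty := Finset.card_pos.1 (by omega)
      obtain ⟨j₀, hj₀, hmax⟩ := Finset.exists_max_image S v hne
      have hS' : (S.erase j₀).card = N := by rw [Finset.card_erase_of_mem hj₀, hN]; omega
      have hsplit := Finset.add_sum_erase S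
        (fun j => ((S.filter (fun k => v k ≤ v j)).card : ℝ)⁻¹) hj₀
      rw [← hsplit]
      have hterm : (S.filter (fun k => v k ≤ v j₀)).card = N + 1 := by
        rw [Finset.filter_true_of_mem (fun k hk => hmax k hk), hN]
      have hrest : ∑ j ∈ S.erase j₀, ((S.filter (fun k => v k ≤ v j)).card : ℝ)⁻¹ ≤
          (harmonic N : ℝ) := by
        refine le_trans (Finset.sum_le_sum ?_) (ih (S.erase j₀) hS')
        intro j hj
        have hpos : 0 < (((S.erase j₀).filter (fun k => v k ≤ v j)).card : ℝ) := by
          have : j ∈ (S.erase j₀).filter (fun k => v k ≤ v j) :=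
            Finset.mem_filter.2 ⟨hj, le_rfl⟩
          exact_mod_cast Finset.card_pos.2 ⟨j, this⟩
        have hle : (((S.erase j₀).filter (fun k => v k ≤ v j)).card : ℝ) ≤
            ((S.filter (fun k => v k ≤ v j)).card : ℝ) := by
          exact_mod_cast Finset.card_le_card
            (Finset.filter_subset_filter _ (Finset.erase_subset _ _))
        exact inv_anti₀ hpos hle
      beta_reduce
      rw [hterm]
      have hh : (harmonic (N + 1) : ℝ) = (harmonic N : ℝ) + ((N : ℝ) + 1)⁻¹ := by
        rw [harmonic_succ]
        push_cast
        ring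
      rw [hh]
      push_cast
      linarith
  exact key S.card S rfl

lemma aux_log13 : Real.log 13 ≤ 3 := by
  rw [Real.log_le_iff_le_exp (by norm_num)]
  have h := Real.exp_one_gt_d9
  have h3 : Real.exp 3 = Real.exp 1 ^ (3:ℕ) := by
    rw [← Real.exp_nat_mul]; norm_num
  rw [h3]
  calc (13:ℝ) ≤ (2.7182818283:ℝ)^(3:ℕ) := by norm_num
    _ ≤ Real.exp 1 ^ (3:ℕ) := pow_le_pow_left₀ (by norm_num) h.le 3

lemma aux_harmonic_le (M : ℕ) (hd : 1 ≤ d) (hM : M ≤ 13 ^ d) :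
    (harmonic M : ℝ) ≤ 4 * d := by
  rcases Nat.eq_zero_or_pos M with rfl | hM0
  · simp [harmonic]
  calc (harmonic M : ℝ) ≤ 1 + Real.log M := harmonic_le_one_add_log M
    _ ≤ 1 + Real.log ((13:ℝ) ^ d) := by
        have hM0' : (0:ℝ) < M := by exact_mod_cast hM0
        gcongr
        exact_mod_cast hM
    _ = 1 + d * Real.log 13 := by rw [Real.log_pow]
    _ ≤ 1 + d * 3 := by
        have : (0:ℝ) ≤ d := Nat.cast_nonneg d
        nlinarith [aux_log13]
    _ ≤ 4 * d := by
        have : (1:ℝ) ≤ d := by exact_mod_cast hd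
        nlinarith

lemma aux_packing (hd : 1 ≤ d) (u : Fin n → Euc d) (s ρ : ℝ) (hs : 0 < s) (hρ : 0 < ρ)
    (hsep : ∀ i j : Fin n, i ≠ j → s ≤ dist (u i) (u j)) (x : Euc d) :
    ((Finset.univ.filter (fun j => dist x (u j) < ρ)).card : ℝ) ≤ ((2*ρ+s)/s)^d := by
  classical
  haveI : Nontrivial (Euc d) := by
    refine ⟨⟨EuclideanSpace.single ⟨0, hd⟩ (1:ℝ), 0, fun hcontra => ?_⟩⟩
    have h1 := congrArg (fun v => v ⟨0, hd⟩) hcontra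
    simp [EuclideanSpace.single_apply] at h1
  set T := Finset.univ.filter (fun j => dist x (u j) < ρ) with hT
  set V := volume (ball (0 : Euc d) 1) with hV
  have hV0 : V ≠ 0 := (measure_ball_pos volume _ one_pos).ne'
  have hVt : V ≠ ⊤ := measure_ball_lt_top.ne
  have hball : ∀ j : Fin n, volume (ball (u j) (s/2)) = ENNReal.ofReal ((s/2)^d) * V := by
    intro j
    rw [Measure.addHaar_ball volume _ (by positivity : (0:ℝ) ≤ s/2)]
    congr 2
    simp [finrank_euclideanSpace_fin]
  have hdisj : (T : Set (Fin n)).PairwiseDisjoint (fun j => ball (u j) (s/2)) := by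
    intro j _ k _ hjk
    exact ball_disjoint_ball (by linarith [hsep j k hjk])
  have hsum : ∑ j ∈ T, volume (ball (u j) (s/2)) = volume (⋃ j ∈ T, ball (u j) (s/2)) :=
    (measure_biUnion_finset hdisj (fun _ _ => measurableSet_ball)).symm
  have hsub : (⋃ j ∈ T, ball (u j) (s/2)) ⊆ ball x (ρ + s/2) := by
    intro y hy
    obtain ⟨j, hjT, hyj⟩ := by simpa using hy
    have hjρ : dist x (u j) < ρ := by simpa [hT] using hjT
    have : dist y x ≤ dist y (u j) + dist (u j) x := dist_triangle _ _ _
    rw [mem_ball] at *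
    rw [dist_comm (u j) x] at this
    linarith
  have hkey : (T.card : ℝ≥0∞) * (ENNReal.ofReal ((s/2)^d) * V) ≤
      ENNReal.ofReal ((ρ + s/2)^d) * V := by
    calc (T.card : ℝ≥0∞) * (ENNReal.ofReal ((s/2)^d) * V)
        = ∑ j ∈ T, volume (ball (u j) (s/2)) := by
          rw [Finset.sum_congr rfl (fun j _ => hball j), Finset.sum_const, nsmul_eq_mul]
      _ = volume (⋃ j ∈ T, ball (u j) (s/2)) := hsum
      _ ≤ volume (ball x (ρ + s/2)) := measure_mono hsub
      _ = ENNReal.ofReal ((ρ + s/2)^d) * V := by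
          rw [Measure.addHaar_ball volume _ (by positivity : (0:ℝ) ≤ ρ + s/2)]
          congr 2
          simp [finrank_euclideanSpace_fin]
  rw [← mul_assoc] at hkey
  have hkey2 : (T.card : ℝ≥0∞) * ENNReal.ofReal ((s/2)^d) ≤ ENNReal.ofReal ((ρ + s/2)^d) :=
    (ENNReal.mul_le_mul_iff_left hV0 hVt).1 hkey
  have hreal : (T.card : ℝ) * (s/2)^d ≤ (ρ + s/2)^d := by
    have := hkey2
    rw [← ENNReal.ofReal_natCast, ← ENNReal.ofReal_mul (by positivity)] at this
    exact (ENNReal.ofReal_le_ofReal_iff (by positivity)).1 this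
  have hdiv : ((2*ρ+s)/s) = (ρ + s/2)/(s/2) := by
    field_simp
  rw [hdiv, div_pow, le_div_iff₀ (by positivity)]
  exact hreal

end Aux3
section Aux4
variable {d n : ℕ}

lemma aux_block_meas (u : Fin n → Euc d) (R : ℝ) (σ : Equiv.Perm (Fin n)) (i : Fin n) :
    MeasurableSet (carvBlock u R σ i) :=
  measurableSet_ball.diff
    (MeasurableSet.biUnion (Set.to_countable _) fun _ _ => measurableSet_ball)

lemma aux_block_disjoint (u : Fin n → Euc d) (R : ℝ) (σ : Equiv.Perm (Fin n)) :
    ∀ i j : Fin n, i ≠ j → Disjoint (carvBlock u R σ i) (carvBlock u R σ j) := by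
  intro i j hij
  rw [Set.disjoint_left]
  intro x hxi hxj
  have hσ : σ i ≠ σ j := fun hc => hij (σ.injective hc)
  rcases lt_or_gt_of_ne hσ with hlt | hlt
  · exact hxj.2 (Set.mem_biUnion (show i ∈ {j' | σ j' < σ j} from hlt) hxi.1)
  · exact hxi.2 (Set.mem_biUnion (show j ∈ {j' | σ j' < σ i} from hlt) hxj.1)

lemma aux_integrableOn (𝒟 : Measure (Euc d)) [IsProbabilityMeasure 𝒟]
    (f : Euc d → ℝ) (hf : IsClassifier f) (A : Set (Euc d)) : IntegrableOn f A 𝒟 := by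
  refine Integrable.mono' (integrable_const 1) hf.1.aestronglyMeasurable ?_
  refine Filter.Eventually.of_forall fun y => ?_
  rcases hf.2 y with h1 | h1 <;> rw [h1] <;> norm_num

/-- Purity of a block: if `h` is constant on `A \ E` then the part of `A` where the
smoothed value errs is controlled by `E` and the risk of `f`. -/
lemma aux_purity (𝒟 : Measure (Euc d)) [IsProbabilityMeasure 𝒟]
    (h f : Euc d → ℝ) (hh : IsClassifier h) (hf : IsClassifier f)
    (A : Set (Euc d)) (hA : MeasurableSet A) (E : Set (Euc d))
    (hAE : ∀ y ∈ A \ E, ∀ z ∈ A \ E, h y = h z) :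
    𝒟 {y | y ∈ A ∧ smoothVal 𝒟 f A ≠ h y} ≤
      2 * 𝒟 (A ∩ E) + 2 * 𝒟 (A ∩ {y | f y ≠ h y}) := by
  classical
  set W := {y | y ∈ A ∧ smoothVal 𝒟 f A ≠ h y} with hW
  have hWA : W ⊆ A := fun y hy => hy.1
  by_cases hAne : (A \ E).Nonempty
  swap
  · -- A \ E empty : W ⊆ A ∩ E
    have hsub : W ⊆ A ∩ E := by
      intro y hy
      refine ⟨hy.1, ?_⟩
      by_contra hyE
      exact hAne ⟨y, hy.1, hyE⟩
    calc 𝒟 W ≤ 𝒟 (A ∩ E) := measure_mono hsub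
      _ ≤ 2 * 𝒟 (A ∩ E) + 2 * 𝒟 (A ∩ {y | f y ≠ h y}) := by
          rw [two_mul]
          exact le_add_right (le_add_right le_rfl)
  obtain ⟨y₀, hy₀⟩ := hAne
  set v := h y₀ with hv
  by_cases hsv : smoothVal 𝒟 f A = v
  · -- smoothed value agrees with the constant label
    have hsub : W ⊆ A ∩ E := by
      intro y hy
      refine ⟨hy.1, ?_⟩
      by_contra hyE
      have hhy : h y = v := hAE y ⟨hy.1, hyE⟩ y₀ hy₀
      exact hy.2 (hsv.trans hhy.symm)
    calc 𝒟 W ≤ 𝒟 (A ∩ E) := measure_mono hsub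
      _ ≤ 2 * 𝒟 (A ∩ E) + 2 * 𝒟 (A ∩ {y | f y ≠ h y}) := by
          rw [two_mul]
          exact le_add_right (le_add_right le_rfl)
  · -- smoothed value disagrees : at least half of A has f ≠ v
    have hkey : 𝒟 A ≤ 2 * 𝒟 (A ∩ {y | f y ≠ v}) := by
      by_cases hA0 : 𝒟 A = 0
      · rw [hA0]; exact zero_le
      have hfin : 𝒟 A ≠ ⊤ := measure_ne_top 𝒟 A
      have htR : 0 < (𝒟 A).toReal := ENNReal.toReal_pos hA0 hfin
      set t : Set (Euc d) := f ⁻¹' {1} with ht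
      have htm : MeasurableSet t := hf.1 (measurableSet_singleton 1)
      have hPN : 𝒟 (A ∩ t) + 𝒟 (A \ t) = 𝒟 A := measure_inter_add_diff A htm
      have hint : ∫ z in A, f z ∂𝒟 = (𝒟 (A ∩ t)).toReal - (𝒟 (A \ t)).toReal := by
        rw [← integral_inter_add_diff htm (aux_integrableOn 𝒟 f hf A)]
        have h1 : ∫ z in A ∩ t, f z ∂𝒟 = (𝒟 (A ∩ t)).toReal := by
          rw [setIntegral_congr_fun (hA.inter htm)
            (fun y hy => (hy.2 : f y = 1)), setIntegral_const, smul_eq_mul, mul_one, measureReal_def]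
        have h2 : ∫ z in A \ t, f z ∂𝒟 = -(𝒟 (A \ t)).toReal := by
          have heq : Set.EqOn f (fun _ => (-1 : ℝ)) (A \ t) := by
            intro y hy
            rcases hf.2 y with hfy | hfy
            · exact absurd hfy hy.2
            · exact hfy
          rw [setIntegral_congr_fun (hA.diff htm) heq, setIntegral_const, smul_eq_mul, measureReal_def]
          ring
        rw [h1, h2]
        ring
      have hvc : v = 1 ∨ v = -1 := hh.2 y₀
      rcases hvc with hv1 | hv1
      · -- v = 1, smoothVal ≠ 1 so sgn = -1, so integral < 0
        have hneg : ¬ (0 ≤ (∫ z in A, f z ∂𝒟) / (𝒟 A).toReal) := by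
          intro hge
          exact hsv (by rw [smoothVal, sgn, if_pos hge, hv1])
        push_neg at hneg
        have hint_neg : (∫ z in A, f z ∂𝒟) < 0 := by
          by_contra hge
          push_neg at hge
          exact absurd (div_nonneg hge htR.le) (not_le.2 hneg)
        rw [hint] at hint_neg
        have hPltN : (𝒟 (A ∩ t)).toReal < (𝒟 (A \ t)).toReal := by linarith
        have hsub : A \ t ⊆ A ∩ {y | f y ≠ v} := by
          intro y hy
          refine ⟨hy.1, ?_⟩
          rw [hv1]
          exact fun hc => hy.2 hc
        calc 𝒟 A ≤ 2 * 𝒟 (A \ t) := by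
              rw [← hPN, two_mul]
              refine add_le_add ?_ le_rfl
              rw [← ENNReal.toReal_le_toReal (measure_ne_top _ _) (measure_ne_top _ _)]
              exact hPltN.le
          _ ≤ 2 * 𝒟 (A ∩ {y | f y ≠ v}) := mul_le_mul_right (measure_mono hsub) _
      · -- v = -1, smoothVal ≠ -1 so sgn = 1, so integral ≥ 0
        have hge : 0 ≤ (∫ z in A, f z ∂𝒟) / (𝒟 A).toReal := by
          by_contra hlt
          exact hsv (by rw [smoothVal, sgn, if_neg hlt, hv1])
        have hint_ge : 0 ≤ (∫ z in A, f z ∂𝒟) := by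
          by_contra hlt
          push_neg at hlt
          exact absurd hge (not_le.2 (div_neg_of_neg_of_pos hlt htR))
        rw [hint] at hint_ge
        have hNleP : (𝒟 (A \ t)).toReal ≤ (𝒟 (A ∩ t)).toReal := by linarith
        have hsub : A ∩ t ⊆ A ∩ {y | f y ≠ v} := by
          intro y hy
          refine ⟨hy.1, ?_⟩
          have hfy : f y = 1 := hy.2
          simp only [Set.mem_setOf_eq, hv1, hfy]
          norm_num
        calc 𝒟 A ≤ 2 * 𝒟 (A ∩ t) := by
              rw [← hPN, two_mul]
              refine add_le_add le_rfl ?_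
              rw [← ENNReal.toReal_le_toReal (measure_ne_top _ _) (measure_ne_top _ _)]
              exact hNleP
          _ ≤ 2 * 𝒟 (A ∩ {y | f y ≠ v}) := mul_le_mul_right (measure_mono hsub) _
    have hsub2 : A ∩ {y | f y ≠ v} ⊆ (A ∩ E) ∪ (A ∩ {y | f y ≠ h y}) := by
      intro y hy
      by_cases hyE : y ∈ E
      · exact Or.inl ⟨hy.1, hyE⟩
      · refine Or.inr ⟨hy.1, ?_⟩
        have hhy : h y = v := hAE y ⟨hy.1, hyE⟩ y₀ hy₀
        simp only [Set.mem_setOf_eq, hhy]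
        exact hy.2
    calc 𝒟 W ≤ 𝒟 A := measure_mono hWA
      _ ≤ 2 * 𝒟 (A ∩ {y | f y ≠ v}) := hkey
      _ ≤ 2 * (𝒟 (A ∩ E) + 𝒟 (A ∩ {y | f y ≠ h y})) :=
          mul_le_mul_right (le_trans (measure_mono hsub2) (measure_union_le _ _)) _
      _ = 2 * 𝒟 (A ∩ E) + 2 * 𝒟 (A ∩ {y | f y ≠ h y}) := by ring

end Aux4
section Aux5
variable {d n : ℕ}

lemma aux_decomp (𝒟 : Measure (Euc d)) [IsProbabilityMeasure 𝒟]
    (h f : Euc d → ℝ) (hh : IsClassifier h) (hf : IsClassifier f)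
    (ε β : ℝ) (hε : 0 < ε) (hβ : 1 < β)
    (u : Fin n → Euc d)
    (hcov : msupport 𝒟 ⊆ ⋃ i, ball (u i) (ε * β / 4))
    (E : Set (Euc d)) (hEm : MeasurableSet E)
    (hEdist : ENNReal.ofReal (ε * β) ≤ setEDist (h ⁻¹' {-1} \ E) (h ⁻¹' {1} \ E))
    (R : ℝ) (σ : Equiv.Perm (Fin n)) (hR1 : ε * β / 4 < R) (hR2 : R ≤ ε * β / 2)
    (g : Euc d → ℝ)
    (hgs : ∀ (x : Euc d) (i : Fin n), x ∈ carvBlock u R σ i →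
      𝒟 (carvBlock u R σ i) ≠ 0 → g x = smoothVal 𝒟 f (carvBlock u R σ i)) :
    advRisk 𝒟 h g ε ≤
      (∑ j : Fin n, 𝒟 {x | dist x (u j) ∈ Set.Ioo (R - ε) (R + ε) ∧
        ∀ k, dist x (u k) ≤ dist x (u j) → k ≠ j → σ j < σ k})
      + (2 * 𝒟 E + 2 * risk 𝒟 h f) := by
  classical
  set V : Fin n → Set (Euc d) := fun j => {x | dist x (u j) ∈ Set.Ioo (R - ε) (R + ε) ∧
    ∀ k, dist x (u k) ≤ dist x (u j) → k ≠ j → σ j < σ k} with hV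
  set Blk : Fin n → Set (Euc d) := fun i => carvBlock u R σ i with hBlk
  set W' : Fin n → Set (Euc d) :=
    fun i => {y | y ∈ Blk i ∧ smoothVal 𝒟 f (Blk i) ≠ h y} with hW'
  set NullS : Set (Euc d) := ⋃ i ∈ {i : Fin n | 𝒟 (Blk i) = 0}, Blk i with hNullS
  -- claim 1 : unpadded points of the support are in some V j
  have claim1 : ∀ x ∈ msupport 𝒟, (¬ ∃ i, ball x ε ⊆ Blk i) → x ∈ ⋃ j, V j := by
    intro x hxs hxu
    set Wf : Finset (Fin n) := Finset.univ.filter (fun k => dist x (u k) < R + ε) with hWf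
    have hne : Wf.Nonempty := by
      obtain ⟨i₀, hi₀⟩ := Set.mem_iUnion.1 (hcov hxs)
      rw [mem_ball] at hi₀
      exact ⟨i₀, Finset.mem_filter.2 ⟨Finset.mem_univ _, by linarith⟩⟩
    obtain ⟨j, hjW, hjmin⟩ := Wf.exists_min_image σ hne
    have hjd : dist x (u j) < R + ε := (Finset.mem_filter.1 hjW).2
    refine Set.mem_iUnion.2 ⟨j, ⟨⟨?_, hjd⟩, ?_⟩⟩
    · -- R - ε < dist x (u j)
      by_contra hle
      push_neg at hle
      refine hxu ⟨j, fun y hy => ?_⟩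
      rw [mem_ball] at hy
      constructor
      · rw [mem_ball]
        calc dist y (u j) ≤ dist y x + dist x (u j) := dist_triangle _ _ _
          _ < ε + (R - ε) := add_lt_add_of_lt_of_le hy hle
          _ = R := by ring
      · intro hymem
        have hytmp : dist y x < ε := hy
        obtain ⟨k, hk, hyk⟩ := by simpa using hymem
        have hkW : k ∉ Wf := fun hkW => absurd (hjmin k hkW) (not_le.2 hk)
        have hkd : R + ε ≤ dist x (u k) := by
          by_contra hc
          push_neg at hc
          exact hkW (Finset.mem_filter.2 ⟨Finset.mem_univ _, hc⟩)
        have htri : dist x (u k) ≤ dist x y + dist y (u k) := dist_triangle _ _ _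
        rw [dist_comm] at hytmp
        linarith
    · -- σ-minimality among closer points
      intro k hkd hkj
      have hkW : k ∈ Wf := Finset.mem_filter.2 ⟨Finset.mem_univ _, by linarith⟩
      have := hjmin k hkW
      rcases lt_or_eq_of_le this with hlt | heq
      · exact hlt
      · exact absurd (σ.injective heq) (Ne.symm hkj)
  -- claim 2 : decomposition of the adversarial-risk set
  have claim2 : {x | ∃ η : Euc d, ‖η‖ < ε ∧ g (x + η) ≠ h x} ⊆
      (msupport 𝒟)ᶜ ∪ (⋃ j, V j) ∪ NullS ∪ (⋃ i, W' i) := by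
    intro x hx
    by_cases hxs : x ∈ msupport 𝒟
    swap
    · exact Or.inl (Or.inl (Or.inl hxs))
    by_cases hxu : ∃ i, ball x ε ⊆ Blk i
    swap
    · exact Or.inl (Or.inl (Or.inr (claim1 x hxs hxu)))
    obtain ⟨i, hball⟩ := hxu
    have hxBlk : x ∈ Blk i := hball (mem_ball_self hε)
    by_cases h0 : 𝒟 (Blk i) = 0
    · exact Or.inl (Or.inr (Set.mem_biUnion (show i ∈ {i : Fin n | 𝒟 (Blk i) = 0} from h0) hxBlk))
    · obtain ⟨η, hη, hgη⟩ := hx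
      have hxη : x + η ∈ ball x ε := by
        rw [mem_ball, dist_eq_norm, add_sub_cancel_left]
        exact hη
      have hgv : g (x + η) = smoothVal 𝒟 f (Blk i) := hgs (x + η) i (hball hxη) h0
      refine Or.inr (Set.mem_iUnion.2 ⟨i, hxBlk, ?_⟩)
      rw [← hgv]
      exact hgη
  -- purity bound for each block
  have hpure : ∀ i : Fin n, 𝒟 (W' i) ≤ 2 * 𝒟 (Blk i ∩ E) + 2 * 𝒟 (Blk i ∩ {y | f y ≠ h y}) := by
    intro i
    refine aux_purity 𝒟 h f hh hf (Blk i) (aux_block_meas u R σ i) E ?_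
    intro y hy z hz
    by_contra hne
    have hdyz : dist y z < ε * β := by
      have h1 : dist y (u i) < R := hy.1.1
      have h2 : dist z (u i) < R := hz.1.1
      calc dist y z ≤ dist y (u i) + dist (u i) z := dist_triangle _ _ _
        _ < R + R := by rw [dist_comm (u i) z]; linarith
        _ ≤ ε * β := by linarith
    have hedist : edist y z < ENNReal.ofReal (ε * β) := by
      rw [edist_dist]
      exact (ENNReal.ofReal_lt_ofReal_iff (by nlinarith)).2 hdyz
    rcases hh.2 y with hy1 | hy1 <;> rcases hh.2 z with hz1 | hz1
    · exact hne (hy1.trans hz1.symm)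
    · -- h y = 1, h z = -1 : z ∈ M₋ \ E, y ∈ M₊ \ E
      have hkey : setEDist (h ⁻¹' {-1} \ E) (h ⁻¹' {1} \ E) ≤ edist z y := by
        refine le_trans (iInf₂_le z ⟨hz1, hz.2⟩) (iInf₂_le y ⟨hy1, hy.2⟩)
      rw [edist_comm] at hedist
      exact absurd (le_trans hEdist hkey) (not_le.2 hedist)
    · have hkey : setEDist (h ⁻¹' {-1} \ E) (h ⁻¹' {1} \ E) ≤ edist y z := by
        refine le_trans (iInf₂_le y ⟨hy1, hy.2⟩) (iInf₂_le z ⟨hz1, hz.2⟩)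
      exact absurd (le_trans hEdist hkey) (not_le.2 hedist)
    · exact hne (hy1.trans hz1.symm)
  -- assemble
  have hNull : 𝒟 NullS = 0 := by
    rw [hNullS]
    exact (measure_biUnion_null_iff (Set.to_countable _)).2 fun i hi => hi
  have hWsum : 𝒟 (⋃ i, W' i) ≤ 2 * 𝒟 E + 2 * risk 𝒟 h f := by
    calc 𝒟 (⋃ i, W' i) ≤ ∑ i : Fin n, 𝒟 (W' i) := measure_iUnion_fintype_le _ _
      _ ≤ ∑ i : Fin n, (2 * 𝒟 (Blk i ∩ E) + 2 * 𝒟 (Blk i ∩ {y | f y ≠ h y})) :=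
          Finset.sum_le_sum fun i _ => hpure i
      _ = 2 * ∑ i : Fin n, 𝒟 (Blk i ∩ E) + 2 * ∑ i : Fin n, 𝒟 (Blk i ∩ {y | f y ≠ h y}) := by
          rw [Finset.sum_add_distrib, Finset.mul_sum, Finset.mul_sum]
      _ ≤ 2 * 𝒟 E + 2 * risk 𝒟 h f := by
          have hdisjE : Pairwise (Function.onFun Disjoint (fun i => Blk i ∩ E)) :=
            fun i j hij => ((aux_block_disjoint u R σ i j hij).mono
              Set.inter_subset_left Set.inter_subset_left)
          have hdisjR : Pairwise (Function.onFun Disjoint (fun i => Blk i ∩ {y | f y ≠ h y})) :=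
            fun i j hij => ((aux_block_disjoint u R σ i j hij).mono
              Set.inter_subset_left Set.inter_subset_left)
          have hmE : ∀ i : Fin n, MeasurableSet (Blk i ∩ E) :=
            fun i => (aux_block_meas u R σ i).inter hEm
          have hmR : ∀ i : Fin n, MeasurableSet (Blk i ∩ {y | f y ≠ h y}) := by
            intro i
            refine (aux_block_meas u R σ i).inter ?_
            have : {y | f y ≠ h y} = {y | (f y - h y) ≠ 0} := by
              ext y; simp [sub_eq_zero]
            rw [this]
            exact (measurableSet_eq_fun (hf.1.sub hh.1) measurable_const).compl
          refine add_le_add (mul_le_mul_right ?_ 2) (mul_le_mul_right ?_ 2)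
          · rw [← tsum_fintype (L := SummationFilter.unconditional _), ← measure_iUnion hdisjE hmE]
            exact measure_mono (Set.iUnion_subset fun i => Set.inter_subset_right)
          · rw [← tsum_fintype (L := SummationFilter.unconditional _), ← measure_iUnion hdisjR hmR]
            exact measure_mono (Set.iUnion_subset fun i => Set.inter_subset_right)
  calc advRisk 𝒟 h g ε ≤
      𝒟 ((msupport 𝒟)ᶜ ∪ (⋃ j, V j) ∪ NullS ∪ (⋃ i, W' i)) := measure_mono claim2
    _ ≤ 𝒟 ((msupport 𝒟)ᶜ ∪ (⋃ j, V j) ∪ NullS) + 𝒟 (⋃ i, W' i) := measure_union_le _ _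
    _ ≤ (𝒟 ((msupport 𝒟)ᶜ ∪ (⋃ j, V j)) + 𝒟 NullS) + 𝒟 (⋃ i, W' i) :=
        add_le_add_left (measure_union_le _ _) _
    _ ≤ ((𝒟 (msupport 𝒟)ᶜ + 𝒟 (⋃ j, V j)) + 𝒟 NullS) + 𝒟 (⋃ i, W' i) :=
        add_le_add_left (add_le_add_left (measure_union_le _ _) _) _
    _ ≤ ((0 + ∑ j : Fin n, 𝒟 (V j)) + 0) + (2 * 𝒟 E + 2 * risk 𝒟 h f) := by
        refine add_le_add (add_le_add (add_le_add ?_ ?_) ?_) hWsum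
        · rw [aux_msupport_compl]
        · exact measure_iUnion_fintype_le _ _
        · rw [hNull]
    _ = (∑ j : Fin n, 𝒟 (V j)) + (2 * 𝒟 E + 2 * risk 𝒟 h f) := by rw [zero_add, add_zero]

end Aux5
section Aux6
variable {d n : ℕ}

lemma aux_prob_x (hd : 1 ≤ d) (ε β : ℝ) (hε : 0 < ε) (hβ : 1 < β)
    (u : Fin n → Euc d)
    (hsepu : ∀ i j : Fin n, i ≠ j → ε * β / 4 ≤ dist (u i) (u j))
    (x : Euc d) :
    ∑ j : Fin n, carvMeasure (ε * β) n
      {p : ℝ × Equiv.Perm (Fin n) | dist x (u j) ∈ Set.Ioo (p.1 - ε) (p.1 + ε) ∧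
        ∀ k, dist x (u k) ≤ dist x (u j) → k ≠ j → p.2 j < p.2 k}
      ≤ ENNReal.ofReal (32 * d / β) := by
  classical
  have hβ0 : 0 < β := by linarith
  set VV : Fin n → Set (ℝ × Equiv.Perm (Fin n)) := fun j =>
    {p : ℝ × Equiv.Perm (Fin n) | dist x (u j) ∈ Set.Ioo (p.1 - ε) (p.1 + ε) ∧
      ∀ k, dist x (u k) ≤ dist x (u j) → k ≠ j → p.2 j < p.2 k} with hVV
  set a := ε * β / 4 with ha
  set b := ε * β / 2 with hb
  have hab : a < b := by rw [ha, hb]; nlinarith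
  set dx : Fin n → ℝ := fun k => dist x (u k) with hdx
  set S : Fin n → Finset (Fin n) := fun j => Finset.univ.filter (fun k => dx k ≤ dx j) with hS
  set T : Finset (Fin n) := Finset.univ.filter (fun j => dx j < b + ε) with hT
  have hprod : ∀ j : Fin n, VV j =
      (Set.Ioo (dx j - ε) (dx j + ε)) ×ˢ
        {σ : Equiv.Perm (Fin n) | ∀ k ∈ S j, k ≠ j → σ j < σ k} := by
    intro j
    ext ⟨R, σ⟩
    simp only [hVV, Set.mem_setOf_eq, Set.mem_prod, Set.mem_Ioo, hS, Finset.mem_filter,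
      Finset.mem_univ, true_and]
    constructor
    · rintro ⟨⟨h1, h2⟩, h3⟩
      exact ⟨⟨by linarith, by linarith⟩, fun k hk => h3 k hk⟩
    · rintro ⟨⟨h1, h2⟩, h3⟩
      exact ⟨⟨by linarith, by linarith⟩, fun k hk => h3 k hk⟩
  have hmeas : ∀ j : Fin n, carvMeasure (ε * β) n (VV j) =
      unifIoc a b (Set.Ioo (dx j - ε) (dx j + ε)) *
        unifPerm n {σ : Equiv.Perm (Fin n) | ∀ k ∈ S j, k ≠ j → σ j < σ k} := by
    intro j
    rw [hprod j, carvMeasure, Measure.prod_prod]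
  have hzero : ∀ j : Fin n, j ∉ T → unifIoc a b (Set.Ioo (dx j - ε) (dx j + ε)) = 0 := by
    intro j hj
    have hjd : b + ε ≤ dx j := by
      by_contra hc
      push_neg at hc
      exact hj (Finset.mem_filter.2 ⟨Finset.mem_univ _, hc⟩)
    rw [aux_unifIoc_apply]
    have hempty : Set.Ioo (dx j - ε) (dx j + ε) ∩ Set.Ioc a b = ∅ := by
      ext y
      simp only [Set.mem_inter_iff, Set.mem_Ioo, Set.mem_Ioc, Set.mem_empty_iff_false,
        iff_false, not_and, and_imp]
      intro h1 _ _ h4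
      linarith
    rw [hempty]
    simp
  have hTbound : ∀ j ∈ T, carvMeasure (ε * β) n (VV j) ≤
      ENNReal.ofReal (8 / β) * ((S j).card : ℝ≥0∞)⁻¹ := by
    intro j _
    rw [hmeas j]
    refine mul_le_mul' ?_ ?_
    · have hle := aux_unifIoc_le a b hab (Set.Ioo (dx j - ε) (dx j + ε)) (dx j - ε) (dx j + ε)
        (fun y hy => ⟨hy.1.1, hy.1.2.le⟩)
      refine le_trans hle (le_of_eq ?_)
      congr 1
      rw [ha, hb]
      have h2 : dx j + ε - (dx j - ε) = 2 * ε := by ring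
      have h3 : ε * β / 2 - ε * β / 4 = ε * β / 4 := by ring
      rw [h2, h3]
      rw [div_eq_div_iff (by nlinarith) (by nlinarith)]
      ring
    · exact aux_unifPerm_le (S j) j (Finset.mem_filter.2 ⟨Finset.mem_univ _, le_rfl⟩)
  have hcardST : ∀ j ∈ T, S j = T.filter (fun k => dx k ≤ dx j) := by
    intro j hj
    have hjd : dx j < b + ε := (Finset.mem_filter.1 hj).2
    ext k
    simp only [hS, hT, Finset.mem_filter, Finset.mem_univ, true_and]
    constructor
    · intro hk
      exact ⟨by linarith, hk⟩
    · intro hk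
      exact hk.2
  have hb0 : (0:ℝ) < b := by rw [hb]; nlinarith
  have hpack : (T.card : ℝ) ≤ (13:ℝ) ^ d := by
    have h1 := aux_packing hd u (ε * β / 4) (b + ε) (by nlinarith) (by nlinarith) hsepu x
    have hbase : (2 * (b + ε) + ε * β / 4) / (ε * β / 4) ≤ 13 := by
      rw [hb, div_le_iff₀ (by nlinarith)]
      nlinarith
    have hbase0 : (0:ℝ) ≤ (2 * (b + ε) + ε * β / 4) / (ε * β / 4) :=
      div_nonneg (by nlinarith) (by nlinarith)
    exact le_trans h1 (pow_le_pow_left₀ hbase0 hbase d)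
  have hcard13 : T.card ≤ 13 ^ d := by
    have h2 : ((T.card : ℝ)) ≤ ((13 ^ d : ℕ) : ℝ) := by push_cast; exact hpack
    exact_mod_cast h2
  have hharm : ∑ j ∈ T, (((S j).card : ℝ≥0∞))⁻¹ ≤ ENNReal.ofReal (4 * d) := by
    have hsum : ∑ j ∈ T, (((S j).card : ℝ≥0∞))⁻¹ =
        ENNReal.ofReal (∑ j ∈ T, (((S j).card : ℝ))⁻¹) := by
      rw [ENNReal.ofReal_sum_of_nonneg (fun j _ => by positivity)]
      refine Finset.sum_congr rfl fun j hj => ?_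
      have hpos : 0 < ((S j).card : ℝ) := by
        have hjj : j ∈ S j := Finset.mem_filter.2 ⟨Finset.mem_univ _, le_rfl⟩
        exact_mod_cast Finset.card_pos.2 ⟨j, hjj⟩
      rw [ENNReal.ofReal_inv_of_pos hpos, ENNReal.ofReal_natCast]
    rw [hsum]
    refine ENNReal.ofReal_le_ofReal ?_
    have h1 : ∑ j ∈ T, (((S j).card : ℝ))⁻¹ =
        ∑ j ∈ T, (((T.filter (fun k => dx k ≤ dx j)).card : ℝ))⁻¹ :=
      Finset.sum_congr rfl fun j hj => by rw [hcardST j hj]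
    rw [h1]
    calc ∑ j ∈ T, (((T.filter (fun k => dx k ≤ dx j)).card : ℝ))⁻¹
        ≤ (harmonic T.card : ℝ) := aux_sum_inv_le T dx
      _ ≤ 4 * d := aux_harmonic_le T.card hd hcard13
  calc ∑ j : Fin n, carvMeasure (ε * β) n (VV j)
      = ∑ j ∈ T, carvMeasure (ε * β) n (VV j) := by
        refine (Finset.sum_subset (Finset.subset_univ T) ?_).symm
        intro j _ hj
        rw [hmeas j, hzero j hj, zero_mul]
    _ ≤ ∑ j ∈ T, ENNReal.ofReal (8 / β) * ((S j).card : ℝ≥0∞)⁻¹ :=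
        Finset.sum_le_sum hTbound
    _ = ENNReal.ofReal (8 / β) * ∑ j ∈ T, ((S j).card : ℝ≥0∞)⁻¹ := by
        rw [Finset.mul_sum]
    _ ≤ ENNReal.ofReal (8 / β) * ENNReal.ofReal (4 * d) := mul_le_mul_right hharm _
    _ ≤ ENNReal.ofReal (32 * d / β) := by
        rw [← ENNReal.ofReal_mul (by positivity)]
        refine ENNReal.ofReal_le_ofReal (le_of_eq ?_)
        field_simp
        ring

end Aux6

/-- Theorem 2 (ball carving partitions): there is a universal constant `C > 0`
such that the following holds.  Let `(𝒟, h)` be a separable binary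
classification task on `ℝ^d` (`d ≥ 1`) with `supp(𝒟)` bounded, `f` a measurable
classifier, `ε > 0`, `β > 1`, and let `g_{R,σ}` be the smoothed classifier
obtained from the ball carving partition of `supp(𝒟)` with parameter `εβ`
(built from a finite `εβ/4`-net `u : Fin n → ℝ^d` of `supp(𝒟)`).  Then
`𝔼_{R,σ}[AR(g, ε)] ≤ 2·S(εβ) + 2·R(f) + C·d/β`, and moreover, if `AR(ε) > 0`,
then `𝔼_{R,σ}[AR(g, ε)] ≤ (2·S(εβ)/S(2ε))·AR(ε) + 2·R(f) + C·d/β`. -/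
theorem stmt14 : ∃ C : ℝ, 0 < C ∧
    ∀ (d n : ℕ), 1 ≤ d →
    ∀ (𝒟 : Measure (Euc d)), IsProbabilityMeasure 𝒟 →
    Bornology.IsBounded (msupport 𝒟) →
    ∀ h : Euc d → ℝ, IsClassifier h →
    ∀ f : Euc d → ℝ, IsClassifier f →
    ∀ (ε β : ℝ), 0 < ε → 1 < β →
    -- `u` is a finite `εβ/4`-net of `supp(𝒟)`
    ∀ u : Fin n → Euc d, (∀ i, u i ∈ msupport 𝒟) →
    (∀ i j, i ≠ j → ε * β / 4 ≤ dist (u i) (u j)) →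
    msupport 𝒟 ⊆ (⋃ i, ball (u i) (ε * β / 4)) →
    -- the smoothed classifiers
    ∀ g : ℝ → Equiv.Perm (Fin n) → Euc d → ℝ,
    (∀ R σ, IsClassifier (g R σ)) →
    (∀ (R : ℝ) (σ : Equiv.Perm (Fin n)) (x : Euc d) (i : Fin n),
      x ∈ carvBlock u R σ i → 𝒟 (carvBlock u R σ i) ≠ 0 →
      g R σ x = smoothVal 𝒟 f (carvBlock u R σ i)) →
    ((∫⁻ p, advRisk 𝒟 h (g p.1 p.2) ε ∂(carvMeasure (ε * β) n)) ≤
        2 * sep 𝒟 h (ε * β) + 2 * risk 𝒟 h f + ENNReal.ofReal (C * d / β) ∧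
      (0 < optAdvRisk 𝒟 h ε →
        (∫⁻ p, advRisk 𝒟 h (g p.1 p.2) ε ∂(carvMeasure (ε * β) n)) ≤
          2 * sep 𝒟 h (ε * β) / sep 𝒟 h (2 * ε) * optAdvRisk 𝒟 h ε +
            2 * risk 𝒟 h f + ENNReal.ofReal (C * d / β))) := by
  classical
  refine ⟨32, by norm_num, ?_⟩
  intro d n hd 𝒟 hprob hbdd h hh f hf ε β hε hβ u hu hsepu hcov g hg hgs
  haveI := hprob
  have hβ0 : 0 < β := lt_trans one_pos hβ
  haveI hPI : IsProbabilityMeasure (unifIoc (ε * β / 4) (ε * β / 2)) :=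
    aux_unifIoc_prob _ _ (by nlinarith)
  haveI hPc : IsProbabilityMeasure (carvMeasure (ε * β) n) := by
    rw [carvMeasure]
    infer_instance
  -- joint measurable "cut" events
  set Wj : Fin n → Set ((ℝ × Equiv.Perm (Fin n)) × Euc d) := fun j =>
    {q | dist q.2 (u j) ∈ Set.Ioo (q.1.1 - ε) (q.1.1 + ε) ∧
      ∀ k, dist q.2 (u k) ≤ dist q.2 (u j) → k ≠ j → q.1.2 j < q.1.2 k} with hWj
  have hWjm : ∀ j, MeasurableSet (Wj j) := by
    intro j
    have hdm : ∀ k : Fin n, Measurable fun q : (ℝ × Equiv.Perm (Fin n)) × Euc d =>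
        dist q.2 (u k) := fun k =>
      ((continuous_id.dist continuous_const).measurable).comp measurable_snd
    have hRm : Measurable fun q : (ℝ × Equiv.Perm (Fin n)) × Euc d => q.1.1 :=
      measurable_fst.fst
    have h1 : MeasurableSet {q : (ℝ × Equiv.Perm (Fin n)) × Euc d |
        dist q.2 (u j) ∈ Set.Ioo (q.1.1 - ε) (q.1.1 + ε)} := by
      have : {q : (ℝ × Equiv.Perm (Fin n)) × Euc d |
          dist q.2 (u j) ∈ Set.Ioo (q.1.1 - ε) (q.1.1 + ε)} =
          {q : (ℝ × Equiv.Perm (Fin n)) × Euc d | q.1.1 - ε < dist q.2 (u j)} ∩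
          {q : (ℝ × Equiv.Perm (Fin n)) × Euc d | dist q.2 (u j) < q.1.1 + ε} := by
        ext q; simp [Set.mem_Ioo]
      rw [this]
      exact (measurableSet_lt (hRm.sub measurable_const) (hdm j)).inter
        (measurableSet_lt (hdm j) (hRm.add measurable_const))
    have h2 : MeasurableSet {q : (ℝ × Equiv.Perm (Fin n)) × Euc d |
        ∀ k, dist q.2 (u k) ≤ dist q.2 (u j) → k ≠ j → q.1.2 j < q.1.2 k} := by
      have : {q : (ℝ × Equiv.Perm (Fin n)) × Euc d |
          ∀ k, dist q.2 (u k) ≤ dist q.2 (u j) → k ≠ j → q.1.2 j < q.1.2 k} =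
          ⋂ k : Fin n, ({q : (ℝ × Equiv.Perm (Fin n)) × Euc d |
            dist q.2 (u k) ≤ dist q.2 (u j)}ᶜ ∪
            {q : (ℝ × Equiv.Perm (Fin n)) × Euc d | k ≠ j → q.1.2 j < q.1.2 k}) := by
        ext q
        simp only [Set.mem_iInter, Set.mem_setOf_eq, Set.mem_union, Set.mem_compl_iff]
        constructor
        · intro hq k
          by_cases hk : dist q.2 (u k) ≤ dist q.2 (u j)
          · exact Or.inr (hq k hk)
          · exact Or.inl hk
        · intro hq k hk
          rcases hq k with hc | hc
          · exact absurd hk hc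
          · exact hc
      rw [this]
      refine MeasurableSet.iInter fun k => MeasurableSet.union ?_ ?_
      · exact (measurableSet_le (hdm k) (hdm j)).compl
      · by_cases hkj : k = j
        · have : {q : (ℝ × Equiv.Perm (Fin n)) × Euc d | k ≠ j → q.1.2 j < q.1.2 k} =
              Set.univ := by
            ext q; simp [hkj]
          rw [this]; exact MeasurableSet.univ
        · have : {q : (ℝ × Equiv.Perm (Fin n)) × Euc d | k ≠ j → q.1.2 j < q.1.2 k} =
              (fun q : (ℝ × Equiv.Perm (Fin n)) × Euc d => q.1.2) ⁻¹'
                {σ : Equiv.Perm (Fin n) | σ j < σ k} := by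
            ext q; simp [hkj]
          rw [this]
          exact measurable_fst.snd (measurableSet_perm _)
    have hset : Wj j = {q : (ℝ × Equiv.Perm (Fin n)) × Euc d |
        dist q.2 (u j) ∈ Set.Ioo (q.1.1 - ε) (q.1.1 + ε)} ∩
        {q : (ℝ × Equiv.Perm (Fin n)) × Euc d |
          ∀ k, dist q.2 (u k) ≤ dist q.2 (u j) → k ≠ j → q.1.2 j < q.1.2 k} := by
      ext q; simp only [hWj, Set.mem_setOf_eq, Set.mem_inter_iff]
    rw [hset]
    exact h1.inter h2
  -- the key bound for an arbitrary admissible separator E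
  have key : ∀ E : Set (Euc d), MeasurableSet E →
      ENNReal.ofReal (ε * β) ≤ setEDist (h ⁻¹' {-1} \ E) (h ⁻¹' {1} \ E) →
      (∫⁻ p, advRisk 𝒟 h (g p.1 p.2) ε ∂(carvMeasure (ε * β) n)) ≤
        2 * 𝒟 E + 2 * risk 𝒟 h f + ENNReal.ofReal (32 * d / β) := by
    intro E hEm hEdist
    -- a.e. pointwise bound
    have haeset : ∀ᵐ p ∂(carvMeasure (ε * β) n), p.1 ∈ Set.Ioc (ε * β / 4) (ε * β / 2) := by
      rw [MeasureTheory.ae_iff]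
      have hcompl : {p : ℝ × Equiv.Perm (Fin n) | ¬ p.1 ∈ Set.Ioc (ε * β / 4) (ε * β / 2)} =
          (Set.Ioc (ε * β / 4) (ε * β / 2))ᶜ ×ˢ (Set.univ : Set (Equiv.Perm (Fin n))) := by
        ext p; simp
      rw [hcompl, carvMeasure, Measure.prod_prod, aux_unifIoc_apply,
        Set.compl_inter_self, measure_empty, mul_zero, zero_mul]
    have hae : ∀ᵐ p ∂(carvMeasure (ε * β) n),
        advRisk 𝒟 h (g p.1 p.2) ε ≤
          (∑ j : Fin n, 𝒟 (Prod.mk p ⁻¹' Wj j)) + (2 * 𝒟 E + 2 * risk 𝒟 h f) := by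
      filter_upwards [haeset] with p hp
      have hb := aux_decomp 𝒟 h f hh hf ε β hε hβ u hcov E hEm hEdist p.1 p.2 hp.1 hp.2
        (g p.1 p.2) (hgs p.1 p.2)
      exact le_trans hb (le_of_eq rfl)
    -- split off the constant part
    have hsum : (∫⁻ p, ∑ j : Fin n, 𝒟 (Prod.mk p ⁻¹' Wj j) ∂(carvMeasure (ε * β) n)) ≤
        ENNReal.ofReal (32 * d / β) := by
      rw [lintegral_finset_sum _ (fun j _ => measurable_measure_prodMk_left (hWjm j))]
      have heq : ∀ j : Fin n, (∫⁻ p, 𝒟 (Prod.mk p ⁻¹' Wj j) ∂(carvMeasure (ε * β) n)) =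
          ∫⁻ x, carvMeasure (ε * β) n ((fun p => (p, x)) ⁻¹' Wj j) ∂𝒟 := by
        intro j
        rw [← Measure.prod_apply (hWjm j), Measure.prod_apply_symm (hWjm j)]
      rw [Finset.sum_congr rfl (fun j _ => heq j),
        ← lintegral_finset_sum _ (fun j _ => measurable_measure_prodMk_right (hWjm j))]
      calc (∫⁻ x, ∑ j : Fin n, carvMeasure (ε * β) n ((fun p => (p, x)) ⁻¹' Wj j) ∂𝒟)
          ≤ ∫⁻ _x, ENNReal.ofReal (32 * d / β) ∂𝒟 := by
            refine lintegral_mono fun x => ?_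
            have hx := aux_prob_x hd ε β hε hβ u hsepu x
            exact le_trans (le_of_eq rfl) hx
        _ = ENNReal.ofReal (32 * d / β) := by
            rw [lintegral_const, measure_univ, mul_one]
    calc (∫⁻ p, advRisk 𝒟 h (g p.1 p.2) ε ∂(carvMeasure (ε * β) n))
        ≤ ∫⁻ p, ((∑ j : Fin n, 𝒟 (Prod.mk p ⁻¹' Wj j)) + (2 * 𝒟 E + 2 * risk 𝒟 h f))
            ∂(carvMeasure (ε * β) n) := lintegral_mono_ae hae
      _ = (∫⁻ p, ∑ j : Fin n, 𝒟 (Prod.mk p ⁻¹' Wj j) ∂(carvMeasure (ε * β) n)) +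
            (2 * 𝒟 E + 2 * risk 𝒟 h f) := by
          rw [lintegral_add_right _ measurable_const, lintegral_const, measure_univ, mul_one]
      _ ≤ ENNReal.ofReal (32 * d / β) + (2 * 𝒟 E + 2 * risk 𝒟 h f) :=
          add_le_add_left hsum _
      _ = 2 * 𝒟 E + 2 * risk 𝒟 h f + ENNReal.ofReal (32 * d / β) := by
          rw [add_comm]
  -- part 1
  have part1 : (∫⁻ p, advRisk 𝒟 h (g p.1 p.2) ε ∂(carvMeasure (ε * β) n)) ≤
      2 * sep 𝒟 h (ε * β) + 2 * risk 𝒟 h f + ENNReal.ofReal (32 * d / β) := by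
    refine ENNReal.le_of_forall_pos_le_add fun δ hδ _hfin => ?_
    have hδ2 : ((δ : ℝ≥0∞) / 2) ≠ 0 := by
      simp [ENNReal.div_eq_zero_iff]
      exact_mod_cast hδ.ne'
    have hlt : sep 𝒟 h (ε * β) < sep 𝒟 h (ε * β) + (δ : ℝ≥0∞) / 2 :=
      ENNReal.lt_add_right (aux_sep_ne_top 𝒟 h (ε * β)) hδ2
    rw [sep] at hlt
    obtain ⟨E, hE⟩ := iInf_lt_iff.1 hlt
    obtain ⟨hEm, hE⟩ := iInf_lt_iff.1 hE
    obtain ⟨hEdist, hE⟩ := iInf_lt_iff.1 hE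
    have hEb : 𝒟 E ≤ sep 𝒟 h (ε * β) + (δ : ℝ≥0∞) / 2 := hE.le
    calc (∫⁻ p, advRisk 𝒟 h (g p.1 p.2) ε ∂(carvMeasure (ε * β) n))
        ≤ 2 * 𝒟 E + 2 * risk 𝒟 h f + ENNReal.ofReal (32 * d / β) := key E hEm hEdist
      _ ≤ 2 * (sep 𝒟 h (ε * β) + (δ : ℝ≥0∞) / 2) + 2 * risk 𝒟 h f +
            ENNReal.ofReal (32 * d / β) := by
          gcongr
      _ = 2 * sep 𝒟 h (ε * β) + 2 * risk 𝒟 h f + ENNReal.ofReal (32 * d / β) + δ := by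
          rw [mul_add, ENNReal.mul_div_cancel' (by norm_num) (by norm_num)]
          ring
  refine ⟨part1, ?_⟩
  -- part 2
  intro hopt
  have hAR : sep 𝒟 h (2 * ε) ≤ optAdvRisk 𝒟 h ε :=
    le_iInf fun f' => le_iInf fun _hf' => aux_sep_le_advRisk 𝒟 h f' ε
  have h2 : 2 * sep 𝒟 h (ε * β) ≤
      2 * sep 𝒟 h (ε * β) / sep 𝒟 h (2 * ε) * optAdvRisk 𝒟 h ε := by
    set A := 2 * sep 𝒟 h (ε * β) with hA
    rcases eq_or_ne A 0 with hA0 | hA0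
    · rw [hA0]
      exact zero_le
    rcases eq_or_ne (sep 𝒟 h (2 * ε)) 0 with hB0 | hB0
    · rw [hB0, ENNReal.div_zero hA0, ENNReal.top_mul hopt.ne']
      exact le_top
    · calc A = A / sep 𝒟 h (2 * ε) * sep 𝒟 h (2 * ε) :=
            (ENNReal.div_mul_cancel hB0 (aux_sep_ne_top 𝒟 h (2 * ε))).symm
        _ ≤ A / sep 𝒟 h (2 * ε) * optAdvRisk 𝒟 h ε := mul_le_mul_right hAR _
  exact le_trans part1 (add_le_add (add_le_add h2 le_rfl) le_rfl)
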